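/- Dyck-2 recognition via the base-3 stack: define a partial run over strings in the alphabet {open₁, open₂, close₁, close₂} starting from stack value 0, where openᵢ performs push(i, s) = 3s + i, and closeᵢ is permitted only if s mod 3 = i, in which case the new stack is ⌊s/3⌋. A string is a well-matched Dyck-2 word if and only if the run is defined at every step and ends with stack value 0. -/

import Mathlib

/-- The four symbols of the Dyck-2 alphabet. -/
inductive DSym where
  | open1 | open2 | close1 | close2
deriving DecidableEq

/-- Dyck-2 words: empty, wrapping in either bracket type, and concatenation. -/
inductive Dyck2 : List DSym → Prop where
  | nil : Dyck2 []
  | wrap1 {w : List DSym} : Dyck2 w → Dyck2 (DSym.open1 :: w ++ [DSym.close1])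
  | wrap2 {w : List DSym} : Dyck2 w → Dyck2 (DSym.open2 :: w ++ [DSym.close2])
  | append {w₁ w₂ : List DSym} : Dyck2 w₁ → Dyck2 w₂ → Dyck2 (w₁ ++ w₂)

/-- One step of the base-3 stack automaton: `openᵢ` pushes digit `i`;
`closeᵢ` is permitted only if the top digit is `i`, and pops it. -/
def step2 (s : ℕ) : DSym → Option ℕ
  | DSym.open1 => some (3 * s + 1)
  | DSym.open2 => some (3 * s + 2)
  | DSym.close1 => if s % 3 = 1 then some (s / 3) else none
  | DSym.close2 => if s % 3 = 2 then some (s / 3) else none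

/-- The (partial) run of the automaton on a word, from stack value `s`. -/
def run2 (s : ℕ) : List DSym → Option ℕ
  | [] => some s
  | a :: w => (step2 s a).bind fun s' => run2 s' w

/-- list-stack automaton -/
def runL (st : List Bool) : List DSym → Option (List Bool)
  | [] => some st
  | DSym.open1 :: w => runL (true :: st) w
  | DSym.open2 :: w => runL (false :: st) w
  | DSym.close1 :: w =>
      match st with
      | true :: st' => runL st' w
      | _ => none
  | DSym.close2 :: w =>
      match st with
      | false :: st' => runL st' w
      | _ => none

def dclose (b : Bool) : DSym := if b then DSym.close1 else DSym.close2

def enc : List Bool → ℕ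
  | [] => 0
  | b :: st => 3 * enc st + (if b then 1 else 2)

lemma run2_eq_runL : ∀ (w : List DSym) (st : List Bool),
    run2 (enc st) w = (runL st w).map enc := by
  intro w
  induction w with
  | nil => intro st; simp [run2, runL]
  | cons a w ih =>
    intro st
    cases a with
    | open1 =>
        have : (3 * enc st + 1) = enc (true :: st) := by simp [enc]
        simp [run2, runL, step2, this, ih]
    | open2 =>
        have : (3 * enc st + 2) = enc (false :: st) := by simp [enc]
        simp [run2, runL, step2, this, ih]
    | close1 =>
        match st with
        | [] => simp [run2, runL, step2, enc]
        | true :: st' =>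
            have h1 : enc (true :: st') % 3 = 1 := by simp [enc]
            have h2 : enc (true :: st') / 3 = enc st' := by simp [enc]; omega
            simp [run2, runL, step2, h1, h2, ih]
        | false :: st' =>
            have h1 : enc (false :: st') % 3 = 2 := by simp [enc]
            simp [run2, runL, step2, h1]
    | close2 =>
        match st with
        | [] => simp [run2, runL, step2, enc]
        | false :: st' =>
            have h1 : enc (false :: st') % 3 = 2 := by simp [enc]
            have h2 : enc (false :: st') / 3 = enc st' := by simp [enc]; omega
            simp [run2, runL, step2, h1, h2, ih]
        | true :: st' =>
            have h1 : enc (true :: st') % 3 = 1 := by simp [enc]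
            simp [run2, runL, step2, h1]

lemma runL_append : ∀ (w₁ w₂ : List DSym) (st : List Bool),
    runL st (w₁ ++ w₂) = (runL st w₁).bind fun st' => runL st' w₂ := by
  intro w₁
  induction w₁ with
  | nil => intro w₂ st; simp [runL]
  | cons a w ih =>
    intro w₂ st
    cases a with
    | open1 => simp [runL, ih]
    | open2 => simp [runL, ih]
    | close1 =>
        match st with
        | [] => simp [runL]
        | true :: st' => simp [runL, ih]
        | false :: st' => simp [runL]
    | close2 =>
        match st with
        | [] => simp [runL]
        | false :: st' => simp [runL, ih]
        | true :: st' => simp [runL]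

lemma runL_frame : ∀ (w : List DSym) (st₁ st₂ st : List Bool),
    runL st₁ w = some st₂ → runL (st₁ ++ st) w = some (st₂ ++ st) := by
  intro w
  induction w with
  | nil => intro st₁ st₂ st h; simp [runL] at h ⊢; exact h ▸ rfl
  | cons a w ih =>
    intro st₁ st₂ st h
    cases a with
    | open1 => exact ih (true :: st₁) st₂ st h
    | open2 => exact ih (false :: st₁) st₂ st h
    | close1 =>
        match st₁ with
        | [] => simp [runL] at h
        | true :: st' => exact ih st' st₂ st h
        | false :: st' => simp [runL] at h
    | close2 =>
        match st₁ with
        | [] => simp [runL] at h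
        | false :: st' => exact ih st' st₂ st h
        | true :: st' => simp [runL] at h

lemma dyck_runL {w : List DSym} (h : Dyck2 w) : ∀ st, runL st w = some st := by
  induction h with
  | nil => intro st; simp [runL]
  | wrap1 _ ih =>
      intro st
      show runL st (DSym.open1 :: (_ ++ [DSym.close1])) = some st
      simp only [runL, runL_append, ih (true :: st), Option.bind_some]
  | wrap2 _ ih =>
      intro st
      show runL st (DSym.open2 :: (_ ++ [DSym.close2])) = some st
      simp only [runL, runL_append, ih (false :: st), Option.bind_some]
  | append _ _ ih₁ ih₂ =>
      intro st
      simp [runL_append, ih₁ st, ih₂ st]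

lemma runL_split : ∀ (n : ℕ) (w : List DSym), w.length ≤ n →
    ∀ (b : Bool) (st fin : List Bool),
    runL (b :: st) w = some fin → fin.length ≤ st.length →
    ∃ u v, w = u ++ dclose b :: v ∧ runL ([] : List Bool) u = some [] ∧
      runL st v = some fin := by
  intro n
  induction n with
  | zero =>
      intro w hw b st fin hrun hlen
      interval_cases h : w.length
      rw [List.length_eq_zero_iff] at h
      subst h
      simp [runL] at hrun
      subst hrun
      simp at hlen
  | succ n ih =>
    intro w hw b st fin hrun hlen
    cases w with
    | nil =>
        simp [runL] at hrun
        subst hrun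
        simp at hlen
    | cons a w' =>
      simp at hw
      cases a with
      | open1 =>
          have hrun' : runL (true :: b :: st) w' = some fin := hrun
          obtain ⟨u', v', heq, hu', hv'⟩ :=
            ih w' hw true (b :: st) fin hrun' (by simp; omega)
          have hv'len : v'.length ≤ n := by
            have := congrArg List.length heq
            simp at this
            omega
          obtain ⟨u'', v'', heq2, hu'', hv''⟩ := ih v' hv'len b st fin hv' hlen
          refine ⟨DSym.open1 :: u' ++ DSym.close1 :: u'', v'', ?_, ?_, hv''⟩
          · simp [heq, heq2, dclose]
          · show runL [true] (u' ++ DSym.close1 :: u'') = some []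
            have hfr : runL ([] ++ [true]) u' = some ([] ++ [true]) :=
              runL_frame u' [] [] [true] hu'
            simp at hfr
            rw [runL_append, hfr]
            simpa [runL] using hu''
      | open2 =>
          have hrun' : runL (false :: b :: st) w' = some fin := hrun
          obtain ⟨u', v', heq, hu', hv'⟩ :=
            ih w' hw false (b :: st) fin hrun' (by simp; omega)
          have hv'len : v'.length ≤ n := by
            have := congrArg List.length heq
            simp at this
            omega
          obtain ⟨u'', v'', heq2, hu'', hv''⟩ := ih v' hv'len b st fin hv' hlen
          refine ⟨DSym.open2 :: u' ++ DSym.close2 :: u'', v'', ?_, ?_, hv''⟩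
          · simp [heq, heq2, dclose]
          · show runL [false] (u' ++ DSym.close2 :: u'') = some []
            have hfr : runL ([] ++ [false]) u' = some ([] ++ [false]) :=
              runL_frame u' [] [] [false] hu'
            simp at hfr
            rw [runL_append, hfr]
            simpa [runL] using hu''
      | close1 =>
          cases b with
          | true =>
              exact ⟨[], w', by simp [dclose], by simp [runL], hrun⟩
          | false => simp [runL] at hrun
      | close2 =>
          cases b with
          | false =>
              exact ⟨[], w', by simp [dclose], by simp [runL], hrun⟩
          | true => simp [runL] at hrun

lemma runL_dyck : ∀ (n : ℕ) (w : List DSym), w.length ≤ n →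
    runL ([] : List Bool) w = some [] → Dyck2 w := by
  intro n
  induction n with
  | zero =>
      intro w hw _
      interval_cases h : w.length
      rw [List.length_eq_zero_iff] at h
      subst h
      exact Dyck2.nil
  | succ n ih =>
    intro w hw hrun
    cases w with
    | nil => exact Dyck2.nil
    | cons a w' =>
      simp at hw
      cases a with
      | open1 =>
          have hrun' : runL [true] w' = some [] := hrun
          obtain ⟨u, v, heq, hu, hv⟩ :=
            runL_split n w' hw true [] [] hrun' (by simp)
          have hlen := congrArg List.length heq
          simp at hlen
          have du : Dyck2 u := ih u (by omega) hu
          have dv : Dyck2 v := ih v (by omega) hv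
          have : DSym.open1 :: w' = (DSym.open1 :: u ++ [DSym.close1]) ++ v := by
            simp [heq, dclose]
          rw [this]
          exact Dyck2.append (Dyck2.wrap1 du) dv
      | open2 =>
          have hrun' : runL [false] w' = some [] := hrun
          obtain ⟨u, v, heq, hu, hv⟩ :=
            runL_split n w' hw false [] [] hrun' (by simp)
          have hlen := congrArg List.length heq
          simp at hlen
          have du : Dyck2 u := ih u (by omega) hu
          have dv : Dyck2 v := ih v (by omega) hv
          have : DSym.open2 :: w' = (DSym.open2 :: u ++ [DSym.close2]) ++ v := by
            simp [heq, dclose]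
          rw [this]
          exact Dyck2.append (Dyck2.wrap2 du) dv
      | close1 => simp [runL] at hrun
      | close2 => simp [runL] at hrun

/-- A word is Dyck-2 iff the stack automaton's run is defined at every step,
starts at 0 and ends at 0. -/
theorem dyck2_iff_run (w : List DSym) : Dyck2 w ↔ run2 0 w = some 0 := by
  have key : run2 0 w = (runL [] w).map enc := by
    have := run2_eq_runL w []
    simpa [enc] using this
  constructor
  · intro h
    rw [key, dyck_runL h []]
    simp [enc]
  · intro h
    rw [key] at h
    obtain ⟨st, hst, henc⟩ := Option.map_eq_some_iff.mp h
    have : st = [] := by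
      cases st with
      | nil => rfl
      | cons b st' =>
          exfalso
          simp [enc] at henc
          cases b <;> simp at henc
    subst this
    exact runL_dyck w.length w le_rfl hst
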